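/- For every i ≥ 1, every word x with at least i occurrences of `false`, and every word y: ⟨a_{q,i}† x | y⟩ = ⟨x | a_{q,i} y⟩, where the right side is 0 if y has fewer than i occurrences of `false`. That is, doubling the i-th anti-pawn is adjoint to deleting the i-th anti-pawn. -/

import Mathlib

/-- A single pawn move: a pawn (`true`) advances one square rightward into an
empty square (`false`). -/
def PawnMove (w₀ w₁ : List Bool) : Prop :=
  ∃ u v : List Bool, w₀ = u ++ [true, false] ++ v ∧ w₁ = u ++ [false, true] ++ v

/-- Reachability: the reflexive-transitive closure of the single-move relation. -/
def Reach : List Bool → List Bool → Prop :=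
  Relation.ReflTransGen PawnMove

/-- The `ZMod 2` pairing `⟨w₀|w₁⟩`: `1` if `w₁` is reachable from `w₀`, else `0`. -/
noncomputable def pairing (w₀ w₁ : List Bool) : ZMod 2 :=
  open Classical in if Reach w₀ w₁ then 1 else 0

/-- Pairing extended to `Option`: any pairing in which one argument is `0`
(i.e. `none`) equals `0`. -/
noncomputable def pairingO : Option (List Bool) → Option (List Bool) → ZMod 2
  | some x, some y => pairing x y
  | none, _ => 0
  | _, none => 0

/-- `delOcc b i w` deletes the `i`-th occurrence (counted from the left,
starting at `1`) of `b` in `w`; it is `none` (i.e. `0`) if `w` has fewer than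
`i` occurrences of `b`. -/
def delOcc (b : Bool) : ℕ → List Bool → Option (List Bool)
  | _, [] => none
  | i, a :: w =>
    if a = b then
      if i = 1 then some w
      else Option.map (List.cons a) (delOcc b (i - 1) w)
    else Option.map (List.cons a) (delOcc b i w)

/-- `dblOcc b i w` doubles the `i`-th occurrence (counted from the left,
starting at `1`) of `b` in `w`, i.e. inserts an additional `b` immediately
before it; it is `none` (i.e. `0`) if `w` has fewer than `i` occurrences of
`b`. -/
def dblOcc (b : Bool) : ℕ → List Bool → Option (List Bool)
  | _, [] => none
  | i, a :: w =>
    if a = b then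
      if i = 1 then some (b :: a :: w)
      else Option.map (List.cons a) (dblOcc b (i - 1) w)
    else Option.map (List.cons a) (dblOcc b i w)

-- Auxiliary lemmas
lemma pawnMove_length {u v : List Bool} (h : PawnMove u v) : u.length = v.length := by
  obtain ⟨U, V, h1, h2⟩ := h; subst h1; subst h2; simp

lemma reach_length {u v : List Bool} (h : Reach u v) : u.length = v.length := by
  induction h with
  | refl => rfl
  | tail _ hstep ih => exact ih.trans (pawnMove_length hstep)

lemma pawnMove_cons {u v : List Bool} (a : Bool) (h : PawnMove u v) :
    PawnMove (a :: u) (a :: v) := by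
  obtain ⟨U, V, h1, h2⟩ := h
  exact ⟨a :: U, V, by simp [h1], by simp [h2]⟩

lemma reach_cons {u v : List Bool} (a : Bool) (h : Reach u v) : Reach (a :: u) (a :: v) := by
  induction h with
  | refl => exact .refl
  | tail _ hstep ih => exact ih.tail (pawnMove_cons a hstep)

lemma pawnMove_false_head {u y : List Bool} (h : PawnMove (false :: u) y) :
    ∃ v, y = false :: v ∧ PawnMove u v := by
  obtain ⟨U, V, h1, h2⟩ := h
  match U, h1 with
  | [], h1 => simp at h1
  | c :: U', h1 =>
    simp at h1
    obtain ⟨hc, hu⟩ := h1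
    exact ⟨U' ++ [false, true] ++ V, by simp [h2, ← hc], U', V, by simp [hu], by simp⟩

lemma reach_false_head {u y : List Bool} (h : Reach (false :: u) y) :
    ∃ v, y = false :: v ∧ Reach u v := by
  have : ∀ w, Reach w y → ∀ u, w = false :: u → ∃ v, y = false :: v ∧ Reach u v := by
    intro w h
    induction h using Relation.ReflTransGen.head_induction_on with
    | refl => exact fun u hu => ⟨u, hu, .refl⟩
    | head hstep _ ih =>
      intro u hu; subst hu
      obtain ⟨v, hv, hmv⟩ := pawnMove_false_head hstep
      obtain ⟨v', hv', hr⟩ := ih v hv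
      exact ⟨v', hv', .head hmv hr⟩
  exact this _ h u rfl

lemma reach_true_true {u v : List Bool} (h : Reach (true :: u) (true :: v)) : Reach u v := by
  have : ∀ w, Reach w (true :: v) → ∀ u, w = true :: u → Reach u v := by
    intro w h
    induction h using Relation.ReflTransGen.head_induction_on with
    | refl => intro u hu; cases hu; exact .refl
    | head hstep _ ih =>
      intro u hu; subst hu
      obtain ⟨U, V, h1, h2⟩ := hstep
      match U, h1 with
      | [], h1 =>
        simp at h1
        subst h2
        obtain ⟨v', hv', _⟩ := reach_false_head (by assumption)
        simp at hv'
      | c :: U', h1 =>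
        rw [List.cons_append, List.cons_append] at h1
        injection h1 with hc hu
        subst h2
        cases hc
        have := ih (U' ++ [false, true] ++ V) (by simp)
        exact .head ⟨U', V, hu, rfl⟩ this
  exact this _ h u rfl

lemma reach_nil {u : List Bool} (h : Reach u []) : u = [] := by
  have := reach_length h; simpa using List.length_eq_zero_iff.mp (by simpa using this)

lemma pairing_cons (a : Bool) (u v : List Bool) : pairing (a :: u) (a :: v) = pairing u v := by
  have : Reach (a :: u) (a :: v) ↔ Reach u v := by
    constructor
    · intro h
      cases a
      · obtain ⟨v', hv', hr⟩ := reach_false_head h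
        injection hv' with _ hv'; subst hv'; exact hr
      · exact reach_true_true h
    · exact reach_cons a
  unfold pairing
  classical
  exact if_congr this rfl rfl

lemma pairing_false_true (u v : List Bool) : pairing (false :: u) (true :: v) = 0 := by
  have : ¬ Reach (false :: u) (true :: v) := by
    intro h
    obtain ⟨v', hv', _⟩ := reach_false_head h
    simp at hv'
  simp [pairing, this]

lemma pairing_nil_left (v : List Bool) (a : Bool) : pairing (a :: v) [] = 0 := by
  have : ¬ Reach (a :: v) [] := fun h => by simpa using reach_nil h
  simp [pairing, this]

/-- Flip the first `false` to `true`. -/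

def bub : List Bool → Option (List Bool)
  | [] => none
  | false :: r => some (true :: r)
  | true :: r => (bub r).map (true :: ·)

lemma reach_bub {u u' : List Bool} (h : bub u = some u') : Reach (true :: u) (false :: u') := by
  induction u generalizing u' with
  | nil => simp [bub] at h
  | cons a r ih =>
    cases a
    · simp [bub] at h; subst h
      exact Relation.ReflTransGen.single ⟨[], r, rfl, rfl⟩
    · simp [bub] at h
      obtain ⟨r', hr', hu'⟩ := h
      subst hu'
      have h1 : Reach (true :: true :: r) (true :: false :: r') := reach_cons true (ih hr')
      exact h1.tail ⟨[], r', rfl, rfl⟩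

lemma bub_pawnMove (U V : List Bool) {z : List Bool}
    (h : bub (U ++ [false, true] ++ V) = some z) :
    ∃ z₀, bub (U ++ [true, false] ++ V) = some z₀ ∧ Reach z₀ z := by
  induction U generalizing z with
  | nil =>
    simp [bub] at h ⊢
    subst h
    exact .refl
  | cons c U' ih =>
    cases c
    · simp only [List.cons_append, bub, Option.some.injEq] at h
      subst h
      refine ⟨true :: (U' ++ [true, false] ++ V), by simp [bub], ?_⟩
      exact Relation.ReflTransGen.single ⟨true :: U', V, by simp, by simp⟩
    · simp only [List.cons_append, bub, List.append_eq, Option.map_eq_some_iff] at h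
      obtain ⟨z', hz', hz⟩ := h
      obtain ⟨z₀, hz₀, hr⟩ := ih hz'
      subst hz
      refine ⟨true :: z₀, ?_, reach_cons true hr⟩
      simp only [List.cons_append, bub, List.append_eq, hz₀, Option.map_some]

lemma reach_true_false {u v : List Bool} (h : Reach (true :: u) (false :: v)) :
    ∃ u', bub u = some u' ∧ Reach u' v := by
  have : ∀ w, Reach w (false :: v) → ∀ u, w = true :: u →
      ∃ u', bub u = some u' ∧ Reach u' v := by
    intro w h
    induction h using Relation.ReflTransGen.head_induction_on with
    | refl => intro u hu; simp at hu
    | head hstep _ ih =>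
      intro u hu; subst hu
      obtain ⟨U, V, h1, h2⟩ := hstep
      match U, h1 with
      | [], h1 =>
        injection h1 with _ h1
        subst h1; subst h2
        obtain ⟨v', hv', hr⟩ := reach_false_head (by assumption)
        injection hv' with _ hv'
        subst hv'
        exact ⟨true :: V, rfl, hr⟩
      | c :: U', h1 =>
        rw [List.cons_append, List.cons_append] at h1
        injection h1 with hc hu
        subst h2
        cases hc
        obtain ⟨z, hz, hr⟩ := ih (U' ++ [false, true] ++ V) (by simp)
        obtain ⟨z₀, hz₀, hr₀⟩ := bub_pawnMove U' V (by simpa using hz)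
        exact ⟨z₀, by simpa [hu] using hz₀, hr₀.trans hr⟩
  exact this _ h u rfl

lemma pairing_true_false (u v : List Bool) :
    pairing (true :: u) (false :: v) = pairingO (bub u) (some v) := by
  rcases hb : bub u with _ | u'
  · have : ¬ Reach (true :: u) (false :: v) := by
      intro h
      obtain ⟨u', hu', _⟩ := reach_true_false h
      rw [hb] at hu'; simp at hu'
    simp [pairing, pairingO, this]
  · have : Reach (true :: u) (false :: v) ↔ Reach u' v := by
      constructor
      · intro h
        obtain ⟨u'', hu'', hr⟩ := reach_true_false h
        rw [hb] at hu''
        injection hu'' with hu''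
        subst hu''; exact hr
      · intro h
        exact (reach_bub hb).trans (reach_cons false h)
    simp only [pairingO]
    unfold pairing
    classical
    exact if_congr this rfl rfl

lemma bub_spec {u : List Bool} (h : 1 ≤ u.count false) :
    ∃ u', bub u = some u' ∧ u'.length = u.length ∧ u'.count false + 1 = u.count false := by
  induction u with
  | nil => simp at h
  | cons a r ih =>
    cases a
    · exact ⟨true :: r, rfl, by simp, by simp [List.count_cons]⟩
    · simp [List.count_cons] at h
      obtain ⟨r', hr', hl, hc⟩ := ih (List.count_pos_iff.mpr h)
      exact ⟨true :: r', by simp [bub, hr'], by simp [hl], by simp [List.count_cons]; omega⟩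

lemma dblOcc_isSome : ∀ (i : ℕ), 1 ≤ i → ∀ (x : List Bool), i ≤ x.count false →
    ∃ x', dblOcc false i x = some x' := by
  intro i hi x
  induction x generalizing i with
  | nil => intro h; simp at h; omega
  | cons a w ih =>
    intro h
    cases a
    · by_cases h1 : i = 1
      · exact ⟨false :: false :: w, by simp [dblOcc, h1]⟩
      · have : i - 1 ≤ w.count false := by simp [List.count_cons] at h; omega
        obtain ⟨x', hx'⟩ := ih (i := i - 1) (by omega) this
        exact ⟨false :: x', by simp [dblOcc, h1, hx']⟩
    · have : i ≤ w.count false := by simpa [List.count_cons] using h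
      obtain ⟨x', hx'⟩ := ih (i := i) hi this
      exact ⟨true :: x', by simp [dblOcc, hx']⟩

lemma dblOcc_one_bind_bub {u : List Bool} (h : 1 ≤ u.count false) :
    (dblOcc false 1 u).bind bub = some (true :: u) := by
  induction u with
  | nil => simp at h
  | cons a r ih =>
    cases a
    · simp [dblOcc, bub]
    · simp [List.count_cons] at h
      have := ih (List.count_pos_iff.mpr h)
      rcases hd : dblOcc false 1 r with _ | z
      · rw [hd] at this; simp at this
      · rw [hd] at this
        simp only [Option.bind_some] at this
        simp [dblOcc, hd, bub, this]

lemma dblOcc_bind_bub (i : ℕ) (hi : 2 ≤ i) (u : List Bool) :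
    (dblOcc false i u).bind bub = (bub u).bind (dblOcc false (i - 1)) := by
  induction u with
  | nil => simp [dblOcc, bub]
  | cons a r ih =>
    cases a
    · have h1 : i ≠ 1 := by omega
      simp only [dblOcc, bub, if_pos rfl, if_neg h1, Option.bind_some]
      rcases dblOcc false (i - 1) r with _ | z
      · simp [dblOcc, bub]
      · simp [dblOcc, bub]
    · rw [show dblOcc false i (true :: r) = Option.map (List.cons true) (dblOcc false i r)
          from by simp [dblOcc],
        show bub (true :: r) = Option.map (List.cons true) (bub r) from rfl]
      rcases hd : dblOcc false i r with _ | z <;> rcases hb : bub r with _ | s <;>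
        rw [hd, hb] at ih <;> simp only [Option.bind_some, Option.bind_none] at ih <;>
        simp only [Option.map_none, Option.map_some, Option.bind_none, Option.bind_some]
      · simp [dblOcc, ← ih]
      · simp [bub, ih]
      · simp only [bub, ih]
        simp [dblOcc]

lemma main_aux : ∀ n x, x.length ≤ n → ∀ i, 1 ≤ i → i ≤ x.count false → ∀ y,
    pairingO (dblOcc false i x) (some y) = pairingO (some x) (delOcc false i y) := by
  intro n
  induction n with
  | zero =>
    intro x hx i hi hc y
    rw [List.length_eq_zero_iff.mp (Nat.le_zero.mp hx)] at hc
    simp at hc; omega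
  | succ n ih =>
    intro x hx i hi hc y
    match x with
    | [] => simp at hc; omega
    | a :: w =>
      have hw : w.length ≤ n := by simpa using hx
      cases a
      · -- head false
        by_cases h1 : i = 1
        · subst h1
          rw [show dblOcc false 1 (false :: w) = some (false :: false :: w) from by
            simp [dblOcc]]
          cases y with
          | nil => simp [delOcc, pairingO, pairing_nil_left]
          | cons b v =>
            cases b
            · rw [show delOcc false 1 (false :: v) = some v from by simp [delOcc]]
              simp [pairingO, pairing_cons]
            · rw [show delOcc false 1 (true :: v) =
                  Option.map (List.cons true) (delOcc false 1 v) from by simp [delOcc]]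
              rcases delOcc false 1 v with _ | z <;> simp [pairingO, pairing_false_true]
        · -- head false, i ≥ 2
          have hc' : i - 1 ≤ w.count false := by simp [List.count_cons] at hc; omega
          obtain ⟨x', hx'⟩ := dblOcc_isSome (i - 1) (by omega) w hc'
          rw [show dblOcc false i (false :: w) =
              Option.map (List.cons false) (dblOcc false (i - 1) w) from by
            simp [dblOcc, h1], hx']
          cases y with
          | nil => simp [delOcc, pairingO, pairing_nil_left]
          | cons b v =>
            cases b
            · rw [show delOcc false i (false :: v) =
                  Option.map (List.cons false) (delOcc false (i - 1) v) from by
                simp [delOcc, h1]]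
              have hih := ih w hw (i - 1) (by omega) hc' v
              rw [hx'] at hih
              rcases hdel : delOcc false (i - 1) v with _ | z <;> rw [hdel] at hih <;>
                simpa [pairingO, pairing_cons] using hih
            · rw [show delOcc false i (true :: v) =
                  Option.map (List.cons true) (delOcc false i v) from by simp [delOcc]]
              rcases delOcc false i v with _ | z <;> simp [pairingO, pairing_false_true]
      · -- head true
        have hcw : i ≤ w.count false := by simpa [List.count_cons] using hc
        obtain ⟨x', hx'⟩ := dblOcc_isSome i hi w hcw
        rw [show dblOcc false i (true :: w) =
            Option.map (List.cons true) (dblOcc false i w) from by simp [dblOcc], hx']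
        cases y with
        | nil => simp [delOcc, pairingO, pairing_nil_left]
        | cons b v =>
          cases b
          · -- y = false :: v
            by_cases h1 : i = 1
            · subst h1
              rw [show delOcc false 1 (false :: v) = some v from by simp [delOcc]]
              have hb6 := dblOcc_one_bind_bub hcw
              rw [hx'] at hb6
              simp only [Option.bind_some] at hb6
              simp only [Option.map_some, pairingO, pairing_true_false, hb6]
            · -- i ≥ 2
              rw [show delOcc false i (false :: v) =
                  Option.map (List.cons false) (delOcc false (i - 1) v) from by
                simp [delOcc, h1]]
              obtain ⟨w'', hw'', hwl, hwc⟩ := bub_spec (u := w) (by omega)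
              have hb5 := dblOcc_bind_bub i (by omega) w
              rw [hx', hw''] at hb5
              simp only [Option.bind_some] at hb5
              have hih := ih w'' (by omega) (i - 1) (by omega) (by omega) v
              rw [← hb5] at hih
              rcases hdel : delOcc false (i - 1) v with _ | z <;> rw [hdel] at hih
              · simp only [Option.map_none, Option.map_some, pairingO,
                  pairing_true_false] at hih ⊢
                exact hih
              · simp only [Option.map_none, Option.map_some, pairingO,
                  pairing_true_false, hw''] at hih ⊢
                exact hih
          · -- y = true :: v
            rw [show delOcc false i (true :: v) =
                Option.map (List.cons true) (delOcc false i v) from by simp [delOcc]]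
            have hih := ih w hw i hi hcw v
            rw [hx'] at hih
            rcases hdel : delOcc false i v with _ | z <;> rw [hdel] at hih <;>
              simpa [pairingO, pairing_cons] using hih

/-- Doubling the `i`-th anti-pawn is adjoint to deleting the `i`-th anti-pawn:
`⟨a_{q,i}† x | y⟩ = ⟨x | a_{q,i} y⟩`. -/
theorem dbl_del_antipawn_adjoint (i : ℕ) (hi : 1 ≤ i) (x : List Bool)
    (hx : i ≤ x.count false) (y : List Bool) :
    pairingO (dblOcc false i x) (some y) = pairingO (some x) (delOcc false i y) := by
  exact main_aux x.length x le_rfl i hi hx y
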